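/- Let s > 0 be a real number and suppose there exists a positive integer N such that |p − qπ| > 1/q^s for all integers p, q > N. Then for every real γ with γ > 2s, the sequence |cos k|^(k^γ) (k ranging over the positive integers) tends to 0 as k → ∞; in particular limsup_{k→∞} |cos k|^(k^γ) = 0. -/

import Mathlib

open Filter Real

/-- If there is a positive integer `N` with `|p - qπ| > 1/q^s` for all integers
`p, q > N`, then for every `γ > 2s` the sequence `|cos k| ^ (k ^ γ)` tends to `0`;
in particular its limsup is `0`. -/
theorem tendsto_zero_of_diophantine_bound (s : ℝ) (hs : 0 < s)
    (h : ∃ N : ℕ, 0 < N ∧ ∀ p q : ℤ, (N : ℤ) < p → (N : ℤ) < q →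
        1 / (q : ℝ) ^ s < |(p : ℝ) - (q : ℝ) * Real.pi|) :
    ∀ γ : ℝ, 2 * s < γ →
      Filter.Tendsto (fun k : ℕ => |Real.cos k| ^ ((k : ℝ) ^ γ)) Filter.atTop (nhds 0) ∧
      Filter.limsup (fun k : ℕ => |Real.cos k| ^ ((k : ℝ) ^ γ)) Filter.atTop = 0 := by
  obtain ⟨N, hN, hD⟩ := h
  intro γ hγ
  set t : ℝ := γ - 2 * s with ht_def
  have ht : 0 < t := by simp only [ht_def]; linarith
  have hπ := Real.pi_pos
  have hπ3 := Real.pi_gt_three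
  -- the dominating sequence
  set g : ℕ → ℝ := fun k => Real.exp (-(2 / Real.pi ^ 2 * (k : ℝ) ^ t)) with hg_def
  have hg0 : Tendsto g atTop (nhds 0) := by
    have h1 : Tendsto (fun k : ℕ => (k : ℝ) ^ t) atTop atTop :=
      (tendsto_rpow_atTop ht).comp tendsto_natCast_atTop_atTop
    have h2 : Tendsto (fun k : ℕ => 2 / Real.pi ^ 2 * (k : ℝ) ^ t) atTop atTop :=
      h1.const_mul_atTop (by positivity)
    exact Real.tendsto_exp_atBot.comp (tendsto_neg_atTop_atBot.comp h2)
  have key : Tendsto (fun k : ℕ => |Real.cos k| ^ ((k : ℝ) ^ γ)) atTop (nhds 0) := by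
    apply squeeze_zero' ?_ ?_ hg0
    · filter_upwards with k
      exact Real.rpow_nonneg (abs_nonneg _) _
    · have hev : ∀ᶠ k : ℕ in atTop, Real.pi * (N + 1) < (k : ℝ) :=
        tendsto_natCast_atTop_atTop.eventually_gt_atTop _
      filter_upwards [hev] with k hk
      have hk0 : (0 : ℝ) < (k : ℝ) := by nlinarith [(Nat.cast_pos (α := ℝ)).mpr hN]
      set m : ℤ := round ((k : ℝ) / Real.pi) with hm_def
      set d : ℝ := (k : ℝ) - (m : ℝ) * Real.pi with hd_def
      have hdle : |d| ≤ Real.pi / 2 := by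
        have h1 : |(k : ℝ) / Real.pi - m| ≤ 1 / 2 := abs_sub_round _
        have h2 : d = Real.pi * ((k : ℝ) / Real.pi - m) := by
          field_simp [hd_def]; ring
        rw [h2, abs_mul, abs_of_pos hπ]
        nlinarith [abs_nonneg ((k : ℝ) / Real.pi - m)]
      have habsd : (k : ℝ) - Real.pi / 2 ≤ (m : ℝ) * Real.pi ∧
          (m : ℝ) * Real.pi ≤ (k : ℝ) + Real.pi / 2 := by
        constructor <;> cases' abs_le.mp hdle with h1 h2 <;> [linarith; linarith]
      have hmN : (N : ℤ) < m := by
        have : ((N : ℝ) + 1 / 2) * Real.pi < (m : ℝ) * Real.pi := by nlinarith [habsd.1]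
        have h3 : ((N : ℝ) + 1 / 2) < (m : ℝ) := lt_of_mul_lt_mul_right this hπ.le
        exact_mod_cast (by push_cast; linarith : ((N : ℤ) : ℝ) < (m : ℝ))
      have hkN : (N : ℤ) < (k : ℤ) := by
        have : ((N : ℝ)) < (k : ℝ) := by nlinarith
        exact_mod_cast this
      have hm0 : (0 : ℝ) < (m : ℝ) := by
        have : (0 : ℤ) < m := lt_of_le_of_lt (by exact_mod_cast Nat.zero_le N) hmN
        exact_mod_cast this
      have hmk : (m : ℝ) ≤ (k : ℝ) := by
        by_contra hc
        push_neg at hc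
        have h1 : (k : ℝ) + 1 ≤ (m : ℝ) := by
          have : (k : ℤ) < m := by exact_mod_cast hc
          have : (k : ℤ) + 1 ≤ m := this
          exact_mod_cast this
        nlinarith [habsd.2]
      -- Diophantine lower bound on |d|
      have hdio : 1 / (k : ℝ) ^ s < |d| := by
        have h1 := hD (k : ℤ) m hkN hmN
        have h2 : 1 / (k : ℝ) ^ s ≤ 1 / (m : ℝ) ^ s := by
          apply one_div_le_one_div_of_le (Real.rpow_pos_of_pos hm0 s)
          exact Real.rpow_le_rpow hm0.le hmk hs.le
        push_cast at h1
        calc 1 / (k : ℝ) ^ s ≤ 1 / (m : ℝ) ^ s := h2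
          _ < |(k : ℝ) - (m : ℝ) * Real.pi| := h1
      have hd0 : 0 < 1 / (k : ℝ) ^ s := by positivity
      -- cosine bound
      have hcos_eq : |Real.cos (k : ℝ)| = |Real.cos d| := by
        have : (k : ℝ) = d + (m : ℝ) * Real.pi := by ring
        rw [this, Real.cos_add_int_mul_pi, abs_mul]
        rcases Int.even_or_odd m with he | ho
        · rw [he.neg_one_zpow]; simp
        · rw [Odd.neg_one_zpow ho]; simp
      have hcosb : |Real.cos (k : ℝ)| ≤ 1 - 2 / Real.pi ^ 2 * d ^ 2 := by
        rw [hcos_eq]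
        have hcn : 0 ≤ Real.cos d :=
          Real.cos_nonneg_of_mem_Icc (abs_le.mp hdle |>.imp (by intro h; linarith) id
            |> fun h => ⟨h.1, h.2⟩)
        rw [abs_of_nonneg hcn]
        exact Real.cos_le_one_sub_mul_cos_sq (by linarith)
      -- exponential bound
      have hexpb : |Real.cos (k : ℝ)| ≤ Real.exp (-(2 / Real.pi ^ 2 * d ^ 2)) := by
        refine hcosb.trans ?_
        have := Real.add_one_le_exp (-(2 / Real.pi ^ 2 * d ^ 2))
        linarith
      have hkγ : (0 : ℝ) ≤ (k : ℝ) ^ γ := Real.rpow_nonneg hk0.le _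
      calc |Real.cos (k : ℕ)| ^ ((k : ℝ) ^ γ)
          ≤ (Real.exp (-(2 / Real.pi ^ 2 * d ^ 2))) ^ ((k : ℝ) ^ γ) :=
            Real.rpow_le_rpow (abs_nonneg _) hexpb hkγ
        _ = Real.exp (-(2 / Real.pi ^ 2 * d ^ 2) * (k : ℝ) ^ γ) :=
            (Real.exp_mul _ _).symm
        _ ≤ g k := by
            rw [hg_def]
            apply Real.exp_le_exp.mpr
            have hsq : (1 / (k : ℝ) ^ s) ^ 2 ≤ d ^ 2 := by
              rw [← sq_abs d]
              exact pow_le_pow_left₀ hd0.le hdio.le 2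
            have hpow : (1 / (k : ℝ) ^ s) ^ 2 * (k : ℝ) ^ γ = (k : ℝ) ^ t := by
              rw [one_div, ← Real.rpow_neg_one, ← Real.rpow_natCast (_ ^ (-1 : ℝ)),
                ← Real.rpow_mul (Real.rpow_nonneg hk0.le _),
                ← Real.rpow_mul hk0.le, ← Real.rpow_add hk0]
              norm_num
              ring_nf
              rw [ht_def]; congr 1; ring
            have h1 : (k : ℝ) ^ t ≤ d ^ 2 * (k : ℝ) ^ γ := by
              rw [← hpow]
              exact mul_le_mul_of_nonneg_right hsq hkγ
            have h2 : 2 / Real.pi ^ 2 * (k : ℝ) ^ t ≤ 2 / Real.pi ^ 2 * (d ^ 2 * (k : ℝ) ^ γ) :=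
              mul_le_mul_of_nonneg_left h1 (by positivity)
            nlinarith [h2]
  exact ⟨key, key.limsup_eq⟩
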